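/- Let q be a prime power, k ≥ 2, let ℙ denote the set of points of the projective space ℙ^{k-1} over 𝔽_q, and let 𝒞 : ℙ → ℤ be a function. Define the Radon transform R(𝒞) on the dual projective space by R(𝒞)(H) = Σ_{x ∈ H} 𝒞(x) for each hyperplane H. Then for every point x, q^{k-2} · 𝒞(x) = R(R(𝒞))(x) − ((q^{k-2} − 1)/(q − 1)) · Σ_{y ∈ ℙ} 𝒞(y), where R(R(𝒞))(x) = Σ_{H ∋ x} R(𝒞)(H). -/

import Mathlib

open Module LinearAlgebra.Projectivization Projectivization

section aux
variable {K V : Type*} [Field K] [Fintype K] [AddCommGroup V] [Module K V] [Finite V]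

lemma geom_aux (q : ℕ) (hq : 1 ≤ q) (d : ℕ) :
    (∑ i ∈ Finset.range d, q ^ i) * (q - 1) + 1 = q ^ d := by
  induction d with
  | zero => simp
  | succ d ih =>
    rw [Finset.sum_range_succ, pow_succ]
    have h1 : q ^ d * (q - 1) + q ^ d = q ^ d * q := by
      rw [← Nat.mul_succ, Nat.succ_eq_add_one, Nat.sub_add_cancel hq]
    have h2 : 1 ≤ q ^ d := Nat.one_le_pow _ _ hq
    nlinarith [ih]

lemma card_proj : Nat.card (ℙ K V) =
    ∑ i ∈ Finset.range (finrank K V), (Fintype.card K) ^ i := by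
  rcases subsingleton_or_nontrivial V with h | h
  · haveI : IsEmpty (ℙ K V) := ⟨fun P => P.rep_nonzero (Subsingleton.elim _ _)⟩
    rw [Nat.card_of_isEmpty, finrank_zero_of_subsingleton, Finset.range_zero,
      Finset.sum_empty]
  · classical
    haveI : Module.Finite K V := Module.Finite.of_finite
    letI : Fintype V := Fintype.ofFinite V
    set q := Fintype.card K with hq
    have hq2 : 2 ≤ q := Fintype.one_lt_card
    set d := finrank K V with hd
    -- bijection (ℙ K V) × Kˣ ≃ {v // v ≠ 0}
    have f : (ℙ K V) × Kˣ → {v : V // v ≠ 0} := fun p =>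
      ⟨(p.2 : K) • p.1.rep, smul_ne_zero p.2.ne_zero p.1.rep_nonzero⟩
    have hbij : Function.Bijective (fun p : (ℙ K V) × Kˣ =>
        (⟨(p.2 : K) • p.1.rep, smul_ne_zero p.2.ne_zero p.1.rep_nonzero⟩ :
          {v : V // v ≠ 0})) := by
      constructor
      · rintro ⟨P, a⟩ ⟨Q, b⟩ hab
        simp only [Subtype.mk.injEq] at hab
        have hPQ : P = Q := by
          have h1 : mk K ((a : K) • P.rep) (smul_ne_zero a.ne_zero P.rep_nonzero) = P := by
            conv_rhs => rw [← P.mk_rep]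
            rw [mk_eq_mk_iff']
            exact ⟨a, rfl⟩
          have h2 : mk K ((b : K) • Q.rep) (smul_ne_zero b.ne_zero Q.rep_nonzero) = Q := by
            conv_rhs => rw [← Q.mk_rep]
            rw [mk_eq_mk_iff']
            exact ⟨b, rfl⟩
          rw [← h1, ← h2]
          congr 1
        subst hPQ
        have hab' : ((a : K) - b) • P.rep = 0 := by rw [sub_smul, hab, sub_self]
        rcases smul_eq_zero.mp hab' with h | h
        · exact Prod.ext rfl (Units.ext (sub_eq_zero.mp h))
        · exact absurd h P.rep_nonzero
      · rintro ⟨v, hv⟩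
        obtain ⟨a, ha⟩ := exists_smul_eq_mk_rep K v hv
        refine ⟨⟨mk K v hv, a⁻¹⟩, ?_⟩
        ext
        simp only
        rw [← ha, Units.smul_def, smul_smul]
        simp
    have hcard : Nat.card (ℙ K V) * (q - 1) = q ^ d - 1 := by
      have h1 : Nat.card ((ℙ K V) × Kˣ) = Nat.card {v : V // v ≠ 0} :=
        Nat.card_eq_of_bijective _ hbij
      rw [Nat.card_prod] at h1
      have h2 : Nat.card Kˣ = q - 1 := by
        rw [Nat.card_eq_fintype_card, Fintype.card_units, hq]
      have h3 : Nat.card {v : V // v ≠ 0} = q ^ d - 1 := by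
        rw [Nat.card_eq_fintype_card]
        have e1 : Fintype.card {v : V // ¬ v = 0} =
            Fintype.card V - Fintype.card {v : V // v = 0} :=
          Fintype.card_subtype_compl _
        have e2 : Fintype.card {v : V // v = 0} = 1 := Fintype.card_subtype_eq (0 : V)
        have e3 : Fintype.card {v : V // v ≠ 0} = Fintype.card {v : V // ¬ v = 0} := rfl
        rw [e3, e1, e2, card_eq_pow_finrank (K := K) (V := V), hq, hd]
      rw [h2, h3] at h1
      exact h1
    have hgeom := geom_aux q (by omega) d
    have hpos : 0 < q - 1 := by omega
    apply Nat.eq_of_mul_eq_mul_right hpos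
    rw [hcard]
    omega

lemma card_rep_mem (W : Submodule K V) :
    Nat.card {P : ℙ K V // P.rep ∈ W} =
      ∑ i ∈ Finset.range (finrank K W), (Fintype.card K) ^ i := by
  have key : Nat.card {P : ℙ K V // P.rep ∈ W} = Nat.card (ℙ K W) := by
    refine (Nat.card_eq_of_bijective (fun Q : ℙ K W =>
      (⟨Projectivization.map W.subtype W.injective_subtype Q, ?_⟩ :
        {P : ℙ K V // P.rep ∈ W})) ⟨?_, ?_⟩).symm
    · induction Q using Projectivization.ind with
      | h w hw =>
        rw [Projectivization.map_mk]
        obtain ⟨a, ha⟩ := exists_smul_eq_mk_rep K (W.subtype w)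
          (by simpa using hw)
        rw [← ha]
        exact W.smul_mem _ (by simp [Units.smul_def])
    · intro Q₁ Q₂ h
      simp only [Subtype.mk.injEq] at h
      exact Projectivization.map_injective W.subtype
        (σ := RingHom.id K) (τ := RingHom.id K) Subtype.coe_injective h
    · rintro ⟨P, hP⟩
      refine ⟨mk K (⟨P.rep, hP⟩ : W) (by simp [P.rep_nonzero, Subtype.ext_iff]), ?_⟩
      simp only [Subtype.mk.injEq]
      rw [Projectivization.map_mk]
      exact P.mk_rep
  rw [key, card_proj]

end aux

theorem stmt0 {F : Type*} [Field F] [Fintype F] (q k : ℕ)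
    (hq : Fintype.card F = q) (hk : 2 ≤ k)
    (C : Projectivization F (Fin k → F) → ℤ)
    (x : Projectivization F (Fin k → F)) :
    (q : ℤ) ^ (k - 2) * C x =
      (∑ᶠ H ∈ {G : Projectivization F (Module.Dual F (Fin k → F)) | G.rep x.rep = 0},
        ∑ᶠ y ∈ {z : Projectivization F (Fin k → F) | H.rep z.rep = 0}, C y)
      - (∑ i ∈ Finset.range (k - 2), (q : ℤ) ^ i) * ∑ᶠ y, C y := by
  classical
  set V := Fin k → F
  set D := Module.Dual F V
  haveI : Finite D := Finite.of_injective (DFunLike.coe : D → V → F) DFunLike.coe_injective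
  haveI : Finite (ℙ F V) := Quotient.finite _
  haveI : Finite (ℙ F D) := Quotient.finite _
  letI : Fintype (ℙ F V) := Fintype.ofFinite _
  letI : Fintype (ℙ F D) := Fintype.ofFinite _
  have hV : finrank F V = k := by simp [V]
  -- counting
  have count : ∀ y : ℙ F V,
      ({G : ℙ F D | G.rep x.rep = 0 ∧ G.rep y.rep = 0}).toFinset.card =
        if y = x then ∑ i ∈ Finset.range (k - 1), q ^ i
        else ∑ i ∈ Finset.range (k - 2), q ^ i := by
    intro y
    set U : Submodule F V := Submodule.span F {x.rep, y.rep} with hU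
    have hset : {G : ℙ F D | G.rep x.rep = 0 ∧ G.rep y.rep = 0} =
        {G : ℙ F D | G.rep ∈ U.dualAnnihilator} := by
      ext G
      simp only [Set.mem_setOf_eq]
      rw [Submodule.mem_dualAnnihilator]
      constructor
      · rintro ⟨h1, h2⟩ w hw
        have hle : U ≤ LinearMap.ker G.rep := by
          rw [hU, Submodule.span_le]
          rintro u (rfl | rfl) <;> simpa
        simpa using hle hw
      · intro h
        exact ⟨h _ (Submodule.subset_span (by simp)),
          h _ (Submodule.subset_span (by simp))⟩
    have hcard : ({G : ℙ F D | G.rep ∈ U.dualAnnihilator}).toFinset.card =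
        ∑ i ∈ Finset.range (finrank F U.dualAnnihilator), q ^ i := by
      rw [← Set.ncard_eq_toFinset_card', ← Nat.card_coe_set_eq, ← hq]
      exact card_rep_mem U.dualAnnihilator
    have hrankU : finrank F U = if y = x then 1 else 2 := by
      split_ifs with hyx
      · subst hyx
        rw [hU, Set.pair_eq_singleton]
        exact finrank_span_singleton (Projectivization.rep_nonzero _)
      · have hxy : x ≠ y := fun h => hyx h.symm
        have hind : LinearIndependent F (Projectivization.rep ∘ ![x, y]) :=
          independent_iff.mp ((independent_pair_iff_ne x y).mpr hxy)
        have hcomp : (Projectivization.rep ∘ ![x, y]) = ![x.rep, y.rep] := by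
          ext i; fin_cases i <;> rfl
        rw [hcomp] at hind
        have hrange : Set.range ![x.rep, y.rep] = {x.rep, y.rep} := by
          ext u
          simp [Matrix.range_cons, Matrix.range_empty]
          tauto
        rw [hU, ← hrange, finrank_span_eq_card hind]
        simp
    have hrankAnn : finrank F U.dualAnnihilator = k - finrank F U := by
      have e1 : finrank F (V ⧸ U) = finrank F U.dualAnnihilator :=
        (Subspace.quotEquivAnnihilator U).finrank_eq
      have e2 := Submodule.finrank_quotient_add_finrank U
      rw [hV] at e2
      omega
    rw [Set.toFinset_congr hset, hcard, hrankAnn, hrankU]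
    split_ifs <;> rfl
  -- rewrite finsums as finset sums
  have h1 : (∑ᶠ H ∈ {G : ℙ F D | G.rep x.rep = 0},
        ∑ᶠ y ∈ {z : ℙ F V | H.rep z.rep = 0}, C y)
      = ∑ H ∈ {G : ℙ F D | G.rep x.rep = 0}.toFinset,
          ∑ y ∈ {z : ℙ F V | H.rep z.rep = 0}.toFinset, C y := by
    conv_lhs => rw [← Set.coe_toFinset {G : ℙ F D | G.rep x.rep = 0}, finsum_mem_coe_finset]
    refine Finset.sum_congr rfl fun H _ => ?_
    conv_lhs => rw [← Set.coe_toFinset {z : ℙ F V | H.rep z.rep = 0}, finsum_mem_coe_finset]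
  have hsum_all : (∑ᶠ y, C y) = ∑ y : ℙ F V, C y := finsum_eq_sum_of_fintype C
  rw [h1, hsum_all]
  have h2 : ∀ H : ℙ F D, ∑ y ∈ {z : ℙ F V | H.rep z.rep = 0}.toFinset, C y
      = ∑ y : ℙ F V, if H.rep y.rep = 0 then C y else 0 := by
    intro H
    rw [Set.toFinset_setOf, Finset.sum_filter]
  rw [Finset.sum_congr rfl (fun H _ => h2 H), Finset.sum_comm]
  have h3 : ∀ y : ℙ F V,
      (∑ H ∈ {G : ℙ F D | G.rep x.rep = 0}.toFinset,
        if H.rep y.rep = 0 then C y else 0)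
      = (({G : ℙ F D | G.rep x.rep = 0 ∧ G.rep y.rep = 0}).toFinset.card : ℤ) * C y := by
    intro y
    have hfe : ({G : ℙ F D | G.rep x.rep = 0}.toFinset.filter
        (fun H => H.rep y.rep = 0)) =
        ({G : ℙ F D | G.rep x.rep = 0 ∧ G.rep y.rep = 0}).toFinset := by
      ext G
      simp [Set.mem_toFinset]
    rw [← Finset.sum_filter, hfe, Finset.sum_const, nsmul_eq_mul]
  rw [Finset.sum_congr rfl (fun y _ => h3 y)]
  have h4 : ∀ y : ℙ F V,
      ((({G : ℙ F D | G.rep x.rep = 0 ∧ G.rep y.rep = 0}).toFinset.card : ℤ) * C y)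
      = (∑ i ∈ Finset.range (k - 2), (q : ℤ) ^ i) * C y
        + (if y = x then (q : ℤ) ^ (k - 2) * C y else 0) := by
    intro y
    rw [count y]
    split_ifs with hyx
    · have hk1 : k - 1 = (k - 2) + 1 := by omega
      rw [hk1]
      push_cast [Finset.sum_range_succ]
      ring
    · push_cast
      ring
  rw [Finset.sum_congr rfl (fun y _ => h4 y), Finset.sum_add_distrib,
    ← Finset.mul_sum, Finset.sum_ite_eq' Finset.univ x
      (fun y => (q : ℤ) ^ (k - 2) * C y)]
  simp only [Finset.mem_univ, if_true]
  ring
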